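/- Consider a decision-making setup: a measurable decision space $(\mathbf{D},\mathcal{D})$, a filtration $(\mathcal{F}_n)_{n\in\mathbb{Z}}$, and for each $n$ a loss function $\lambda_n : \Omega \times \mathbf{D} \to [0,1]$ that is $\mathcal{F}_{n+K} \times \mathcal{D}$-measurable, where $K \ge 1$ is the impact horizon. A decision strategy is a sequence $(A_n)$ of $\mathcal{F}_n/\mathcal{D}$-measurable maps $A_n : \Omega \to \mathbf{D}$, with total loss $\mathrm{Loss}_N(A) = \sum_{n=1}^N \lambda_n(A_n)$. Suppose $B$ is a Bayesian strategy, i.e., $\mathbb{E}(\lambda_n(B_n)\mid\mathcal{F}_n) \le \mathbb{E}(\lambda_n(A_n)\mid\mathcal{F}_n)$ a.s. for every $n$ and every decision strategy $A$. Then for every $\epsilon \in (0,0.7)$, every decision strategy $A$, and every $N$: $P\left(\mathrm{Loss}_N(B) - \mathrm{Loss}_N(A) \ge 4\sqrt{K(N+K)\ln(1/\epsilon)}\right) < \epsilon$. -/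

import Mathlib

open MeasureTheory ProbabilityTheory

variable {Ω D : Type*}

section Aux

lemma exp_le_cosh_add_mul_sinh {c z : ℝ} (hz : |z| ≤ 1) :
    Real.exp (c * z) ≤ Real.cosh c + z * Real.sinh c := by
  obtain ⟨hz1, hz2⟩ := abs_le.mp hz
  have key := convexOn_exp.2 (Set.mem_univ c) (Set.mem_univ (-c))
    (by linarith : (0:ℝ) ≤ (1+z)/2) (by linarith : (0:ℝ) ≤ (1-z)/2) (by ring)
  simp only [smul_eq_mul] at key
  have h1 : (1+z)/2 * c + (1-z)/2 * (-c) = c * z := by ring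
  rw [h1] at key
  rw [Real.cosh_eq, Real.sinh_eq]
  calc Real.exp (c*z) ≤ (1+z)/2 * Real.exp c + (1-z)/2 * Real.exp (-c) := key
  _ = (Real.exp c + Real.exp (-c))/2 + z * ((Real.exp c - Real.exp (-c))/2) := by ring

lemma bdd_integrable {Ω : Type*} {m0 : MeasurableSpace Ω} {P : Measure Ω}
    [IsFiniteMeasure P] {f : Ω → ℝ} (hf : AEStronglyMeasurable f P) {C : ℝ}
    (hC : ∀ ω, |f ω| ≤ C) : Integrable f P :=
  (integrable_const C).mono' hf (ae_of_all _ fun ω => by simpa using hC ω)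

lemma condexp_exp_le {Ω : Type*} {m0 : MeasurableSpace Ω} (P : Measure Ω)
    [IsProbabilityMeasure P] {m : MeasurableSpace Ω} (hm : m ≤ m0)
    {Z : Ω → ℝ} (hZm : Measurable[m0] Z) (hZb : ∀ ω, |Z ω| ≤ 1)
    (hZc : P[Z|m] ≤ᵐ[P] (fun _ => (0:ℝ))) {c : ℝ} (hc : 0 ≤ c) :
    P[fun ω => Real.exp (c * Z ω)|m] ≤ᵐ[P] fun _ => Real.exp (c^2/2) := by
  have hZint : Integrable Z P := bdd_integrable (hZm.aestronglyMeasurable (μ := P)) hZb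
  have h1 : ∀ ω, Real.exp (c * Z ω) ≤ Real.cosh c + Real.sinh c * Z ω := fun ω => by
    have := exp_le_cosh_add_mul_sinh (c := c) (hZb ω); linarith [this]
  have hexpint : Integrable (fun ω => Real.exp (c * Z ω)) P := by
    refine bdd_integrable (((hZm.const_mul c).exp).aestronglyMeasurable (μ := P)) (C := Real.exp c) ?_
    intro ω
    rw [abs_of_pos (Real.exp_pos _)]
    apply Real.exp_le_exp.mpr
    calc c * Z ω ≤ c * 1 := mul_le_mul_of_nonneg_left (abs_le.mp (hZb ω)).2 hc
    _ = c := mul_one c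
  have hrhsint : Integrable (fun ω => Real.cosh c + Real.sinh c * Z ω) P :=
    (integrable_const _).add (hZint.const_mul _)
  have step1 := condExp_mono (μ := P) (m := m) hexpint hrhsint (ae_of_all _ h1)
  have step2 : P[fun ω => Real.cosh c + Real.sinh c * Z ω|m]
      =ᵐ[P] fun ω => Real.cosh c + Real.sinh c * (P[Z|m]) ω := by
    have ha := condExp_add (μ := P) (m := m) (f := fun _ => Real.cosh c)
      (g := fun ω => Real.sinh c * Z ω) (integrable_const _) (hZint.const_mul _)
    have hb : P[fun ω => Real.sinh c * Z ω|m] =ᵐ[P] fun ω => Real.sinh c * (P[Z|m]) ω :=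
      condExp_smul (μ := P) (m := m) (Real.sinh c) Z
    have hconst : P[fun _ => Real.cosh c|m] = fun _ => Real.cosh c := condExp_const hm _
    filter_upwards [ha, hb] with ω hω1 hω2
    calc (P[fun ω => Real.cosh c + Real.sinh c * Z ω|m]) ω
        = (P[fun _ => Real.cosh c|m]) ω + (P[fun ω => Real.sinh c * Z ω|m]) ω := hω1
      _ = Real.cosh c + Real.sinh c * (P[Z|m]) ω := by rw [hconst, hω2]
  filter_upwards [step1, step2, hZc] with ω h1' h2' h3'
  have hs : 0 ≤ Real.sinh c := Real.sinh_nonneg_iff.mpr hc  -- check name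
  calc (P[fun ω => Real.exp (c * Z ω)|m]) ω ≤ Real.cosh c + Real.sinh c * (P[Z|m]) ω := by
        rw [← h2']; exact h1'
    _ ≤ Real.cosh c + 0 := by nlinarith [mul_nonpos_of_nonneg_of_nonpos hs h3']
    _ ≤ Real.exp (c^2/2) := by simpa using Real.cosh_le_exp_half_sq c

lemma mgf_sum_le {Ω : Type*} {m0 : MeasurableSpace Ω} (P : Measure Ω)
    [IsProbabilityMeasure P] (𝒢 : ℕ → MeasurableSpace Ω)
    (h𝒢m : ∀ q, 𝒢 q ≤ m0) (h𝒢 : Monotone 𝒢)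
    (Z : ℕ → Ω → ℝ) (hmeas : ∀ q, Measurable[𝒢 (q+1)] (Z q))
    (hbd : ∀ q ω, |Z q ω| ≤ 1) (hcond : ∀ q, P[Z q|𝒢 q] ≤ᵐ[P] (fun _ => (0:ℝ)))
    {c : ℝ} (hc : 0 ≤ c) (m : ℕ) :
    ∫ ω, Real.exp (c * ∑ q ∈ Finset.range m, Z q ω) ∂P ≤ Real.exp (m * c^2/2) := by
  induction m with
  | zero => simp
  | succ m ih =>
    have hZm0 : ∀ q, Measurable[m0] (Z q) := fun q => (hmeas q).mono (h𝒢m (q+1)) le_rfl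
    set F : Ω → ℝ := fun ω => Real.exp (c * ∑ q ∈ Finset.range m, Z q ω) with hF
    set G : Ω → ℝ := fun ω => Real.exp (c * Z m ω) with hG
    have hFmeasm : Measurable[𝒢 m] F := by
      refine Measurable.exp (Measurable.const_mul ?_ c)
      exact Finset.measurable_sum _ fun q hq =>
        (hmeas q).mono (h𝒢 (Finset.mem_range.mp hq)) le_rfl
    have hFmeas : Measurable[m0] F := hFmeasm.mono (h𝒢m m) le_rfl
    have hGmeas : Measurable[m0] G := ((hZm0 m).const_mul c).exp
    have hFbd : ∀ ω, |F ω| ≤ Real.exp (c * m) := by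
      intro ω
      rw [abs_of_pos (Real.exp_pos _)]
      apply Real.exp_le_exp.mpr
      apply mul_le_mul_of_nonneg_left ?_ hc
      calc ∑ q ∈ Finset.range m, Z q ω ≤ ∑ q ∈ Finset.range m, 1 :=
            Finset.sum_le_sum fun q _ => (abs_le.mp (hbd q ω)).2
        _ = m := by simp
    have hGbd : ∀ ω, |G ω| ≤ Real.exp c := by
      intro ω
      rw [abs_of_pos (Real.exp_pos _)]
      apply Real.exp_le_exp.mpr
      calc c * Z m ω ≤ c * 1 := mul_le_mul_of_nonneg_left (abs_le.mp (hbd m ω)).2 hc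
        _ = c := mul_one c
    have hFint : Integrable F P := bdd_integrable (hFmeas.aestronglyMeasurable (μ := P)) hFbd
    have hGint : Integrable G P := bdd_integrable (hGmeas.aestronglyMeasurable (μ := P)) hGbd
    have hFGint : Integrable (F * G) P := by
      refine bdd_integrable (((hFmeas.mul hGmeas).aestronglyMeasurable (μ := P)))
        (C := Real.exp (c * m) * Real.exp c) fun ω => ?_
      rw [Pi.mul_apply, abs_mul]
      exact mul_le_mul (hFbd ω) (hGbd ω) (abs_nonneg _) (Real.exp_pos _).le
    have hsplit : (fun ω => Real.exp (c * ∑ q ∈ Finset.range (m+1), Z q ω)) = F * G := by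
      funext ω
      rw [Pi.mul_apply, hF, hG, ← Real.exp_add, Finset.sum_range_succ, mul_add]
    rw [hsplit]
    have hcondG : P[G|𝒢 m] ≤ᵐ[P] fun _ => Real.exp (c^2/2) :=
      condexp_exp_le P (h𝒢m m) (hZm0 m) (hbd m) (hcond m) hc
    have hpull : P[F * G|𝒢 m] =ᵐ[P] F * P[G|𝒢 m] :=
      condExp_mul_of_stronglyMeasurable_left hFmeasm.stronglyMeasurable hFGint hGint
    have hFcondint : Integrable (F * (P[G|𝒢 m])) P :=
      (integrable_condExp (m := 𝒢 m) (f := G)).bdd_mul (hFmeas.aestronglyMeasurable (μ := P))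
        (ae_of_all _ fun ω => by simpa using hFbd ω)
    calc ∫ ω, (F * G) ω ∂P = ∫ ω, (P[F * G|𝒢 m]) ω ∂P := (integral_condExp (h𝒢m m)).symm
      _ = ∫ ω, (F * (P[G|𝒢 m])) ω ∂P := integral_congr_ae hpull
      _ ≤ ∫ ω, F ω * Real.exp (c^2/2) ∂P := by
          refine integral_mono_ae hFcondint (hFint.mul_const _) ?_
          filter_upwards [hcondG] with ω hω
          exact mul_le_mul_of_nonneg_left hω (Real.exp_pos _).le
      _ = (∫ ω, F ω ∂P) * Real.exp (c^2/2) := integral_mul_const _ _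
      _ ≤ Real.exp (m * c^2/2) * Real.exp (c^2/2) :=
          mul_le_mul_of_nonneg_right (ih) (Real.exp_pos _).le
      _ = Real.exp ((m+1 : ℕ) * c^2/2) := by rw [← Real.exp_add]; congr 1; push_cast; ring

lemma sum_range_mul_eq {M : Type*} [AddCommMonoid M] (f : ℕ → M) (m k : ℕ) :
    ∑ i ∈ Finset.range (m * k), f i
      = ∑ q ∈ Finset.range m, ∑ r ∈ Finset.range k, f (q * k + r) := by
  induction m with
  | zero => simp
  | succ m ih =>
    rw [Finset.sum_range_succ, ← ih, Nat.succ_mul, Finset.sum_range_add]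

lemma sum_Icc_int_eq {M : Type*} [AddCommMonoid M] (f : ℤ → M) (N : ℕ) :
    ∑ n ∈ Finset.Icc (1 : ℤ) N, f n = ∑ i ∈ Finset.range N, f (1 + i) := by
  refine (Finset.sum_nbij' (fun i : ℕ => (1 + i : ℤ)) (fun n : ℤ => (n - 1).toNat)
    ?_ ?_ ?_ ?_ ?_).symm
  · intro a ha
    simp only [Finset.mem_range] at ha
    simp only [Finset.mem_Icc]
    omega
  · intro a ha
    simp only [Finset.mem_Icc] at ha
    simp only [Finset.mem_range]
    omega
  · intro a ha
    show ((1 + (a:ℤ)) - 1).toNat = a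
    omega
  · intro a ha
    simp only [Finset.mem_Icc] at ha
    show (1 + (((a - 1).toNat : ℕ) : ℤ)) = a
    omega
  · intro a _; rfl

end Aux

/-- A decision strategy: an adapted sequence of decision-valued random elements. -/
def IsStrategy [m0 : MeasurableSpace Ω] [mD : MeasurableSpace D]
    (ℱ : Filtration ℤ m0) (A : ℤ → Ω → D) : Prop :=
  ∀ n : ℤ, Measurable[ℱ n] (A n)

theorem bayesian_strategy_is_competitive
    [m0 : MeasurableSpace Ω] [mD : MeasurableSpace D]
    (P : Measure Ω) [IsProbabilityMeasure P]
    (ℱ : Filtration ℤ m0) (K : ℕ) (hK : 1 ≤ K)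
    (lam : ℤ → Ω → D → ℝ)
    (hrange : ∀ n ω d, lam n ω d ∈ Set.Icc (0 : ℝ) 1)
    (hlammeas : ∀ n : ℤ,
      Measurable[(ℱ (n + K)).prod mD] (fun p : Ω × D => lam n p.1 p.2))
    (B : ℤ → Ω → D) (hB : IsStrategy ℱ B)
    (hBayes : ∀ n : ℤ, ∀ A : ℤ → Ω → D, IsStrategy ℱ A →
      ∀ᵐ ω ∂P, (P[fun ω' => lam n ω' (B n ω')|ℱ n]) ω ≤
        (P[fun ω' => lam n ω' (A n ω')|ℱ n]) ω)
    (ε : ℝ) (hε : ε ∈ Set.Ioo (0 : ℝ) 0.7)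
    (A : ℤ → Ω → D) (hA : IsStrategy ℱ A) (N : ℕ) :
    P {ω | 4 * Real.sqrt (K * (N + K) * Real.log (1 / ε)) ≤
        ∑ n ∈ Finset.Icc (1 : ℤ) N, (lam n ω (B n ω) - lam n ω (A n ω))}
      < ENNReal.ofReal ε := by
  obtain ⟨hε0, hε7⟩ := hε
  have hε1 : ε < 1 := lt_trans hε7 (by norm_num)
  have hKR : (0:ℝ) < K := by exact_mod_cast hK
  set L := Real.log (1 / ε) with hLdef
  have hL : 0 < L := Real.log_pos (by rw [lt_div_iff₀ hε0]; linarith)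
  set t : ℝ := 4 * Real.sqrt (K * (N + K) * L) with htdef
  have hKNK : (0:ℝ) < K * (N + K) := by positivity
  have htpos : 0 < t := by
    rw [htdef]
    have : 0 < Real.sqrt (K * (N + K) * L) := Real.sqrt_pos.mpr (by positivity)
    linarith
  -- the loss difference process
  set Y : ℤ → Ω → ℝ := fun n ω => lam n ω (B n ω) - lam n ω (A n ω) with hYdef
  have hnK : ∀ n : ℤ, n ≤ n + K := fun n => le_add_of_nonneg_right (by positivity)
  have hcompmeas : ∀ (C : ℤ → Ω → D), IsStrategy ℱ C → ∀ n : ℤ,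
      Measurable[ℱ (n + K)] (fun ω => lam n ω (C n ω)) := by
    intro C hC n
    have h1 : Measurable[ℱ (n + K)] (C n) := (hC n).mono (ℱ.mono (hnK n)) le_rfl
    have h2 : @Measurable Ω (Ω × D) (ℱ (n + K)) ((ℱ (n + K)).prod mD)
        (fun ω => (ω, C n ω)) := Measurable.prodMk measurable_id h1
    exact (hlammeas n).comp h2
  have hYmeasF : ∀ n : ℤ, Measurable[ℱ (n + K)] (Y n) := fun n =>
    ((hcompmeas B hB n).sub (hcompmeas A hA n))
  have hYmeas0 : ∀ n, Measurable[m0] (Y n) := fun n =>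
    (hYmeasF n).mono (ℱ.le _) le_rfl
  have hYbd : ∀ n ω, |Y n ω| ≤ 1 := by
    intro n ω
    have h1 := hrange n ω (B n ω); have h2 := hrange n ω (A n ω)
    simp only [Set.mem_Icc] at h1 h2
    rw [hYdef, abs_le]
    constructor <;> simp only <;> linarith
  have hCint : ∀ (C : ℤ → Ω → D), IsStrategy ℱ C → ∀ n : ℤ,
      Integrable (fun ω => lam n ω (C n ω)) P := by
    intro C hC n
    refine bdd_integrable ((((hcompmeas C hC n).mono (ℱ.le _)
      le_rfl)).aestronglyMeasurable (μ := P)) (C := 1) fun ω => ?_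
    have := hrange n ω (C n ω); simp only [Set.mem_Icc] at this
    rw [abs_le]; constructor <;> linarith [this.1, this.2]
  have hYcond : ∀ n : ℤ, P[Y n|ℱ n] ≤ᵐ[P] (fun _ => (0:ℝ)) := by
    intro n
    have hsub := condExp_sub (μ := P) (m := ℱ n)
      (hCint B hB n) (hCint A hA n)
    have hYeq : Y n = (fun ω => lam n ω (B n ω)) - (fun ω => lam n ω (A n ω)) := rfl
    rw [hYeq]
    filter_upwards [hsub, hBayes n A hA] with ω hω1 hω2
    rw [hω1]
    simp only [Pi.sub_apply]
    linarith
  -- reindexing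
  set Mq : ℕ := (N + K - 1) / K with hMqdef
  have hMqK : N ≤ Mq * K ∧ Mq * K ≤ N + K := by
    have h1 : K * Mq + (N + K - 1) % K = N + K - 1 := Nat.div_add_mod _ _
    have h2 : (N + K - 1) % K < K := Nat.mod_lt _ (by omega)
    rw [mul_comm Mq K]
    generalize K * Mq = x at h1 ⊢
    omega
  set W : ℕ → Ω → ℝ := fun i ω => if i < N then Y (1 + i) ω else 0 with hWdef
  set T : ℕ → Ω → ℝ := fun r ω => ∑ q ∈ Finset.range Mq, W (q * K + r) ω with hTdef
  set S : Ω → ℝ := fun ω => ∑ n ∈ Finset.Icc (1 : ℤ) N, Y n ω with hSdef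
  have hST : ∀ ω, S ω = ∑ r ∈ Finset.range K, T r ω := by
    intro ω
    rw [hSdef]
    simp only
    rw [sum_Icc_int_eq (fun n => Y n ω) N]
    have hzero : ∀ i ∈ Finset.range (Mq * K), i ∉ Finset.range N → W i ω = 0 := by
      intro i _ hi
      simp only [Finset.mem_range, not_lt] at hi
      show (if i < N then Y (1 + i) ω else 0) = 0
      rw [if_neg (by omega)]
    have hpad : ∑ i ∈ Finset.range N, Y (1 + i) ω
        = ∑ i ∈ Finset.range (Mq * K), W i ω := by
      rw [← Finset.sum_subset (Finset.range_subset_range.mpr hMqK.1) hzero]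
      refine Finset.sum_congr rfl fun i hi => ?_
      show Y (1 + i) ω = (if i < N then Y (1 + i) ω else 0)
      rw [if_pos (Finset.mem_range.mp hi)]
    rw [hpad, sum_range_mul_eq (fun i => W i ω) Mq K, Finset.sum_comm]
  -- parameters
  set lam2 : ℝ := t / (K * (N + K)) with hlam2def
  have hlam2pos : 0 < lam2 := div_pos htpos hKNK
  set c : ℝ := K * lam2 with hcdef
  have hcpos : 0 < c := mul_pos hKR hlam2pos
  -- per class bound
  have hT : ∀ r : ℕ, ∫ ω, Real.exp (c * T r ω) ∂P ≤ Real.exp ((Mq : ℝ) * c^2/2) := by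
    intro r
    refine mgf_sum_le P (fun q => ℱ (1 + (r : ℤ) + q * K)) (fun q => ℱ.le _)
      ?_ (fun q => W (q * K + r)) ?_ ?_ ?_ hcpos.le Mq
    · intro q q' hqq'
      refine ℱ.mono ?_
      have hq : (q : ℤ) ≤ q' := by exact_mod_cast hqq'
      have hK0 : (0:ℤ) ≤ (K:ℤ) := by positivity
      nlinarith
    · intro q
      show Measurable[ℱ (1 + (r : ℤ) + ((q + 1 : ℕ) : ℤ) * (K : ℤ))] (W (q * K + r))
      by_cases hqN : q * K + r < N
      · have heq : W (q * K + r) = Y (1 + (q * K + r : ℕ)) := by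
          funext ω
          show (if q * K + r < N then Y (1 + (q * K + r : ℕ)) ω else 0) = _
          rw [if_pos hqN]
        rw [heq]
        refine (hYmeasF _).mono (le_of_eq ?_) le_rfl
        congr 1
        push_cast
        ring
      · have heq : W (q * K + r) = fun _ => (0:ℝ) := by
          funext ω
          show (if q * K + r < N then Y (1 + (q * K + r : ℕ)) ω else 0) = _
          rw [if_neg hqN]
        rw [heq]; exact measurable_const
    · intro q ω
      show |(if q * K + r < N then Y (1 + (q * K + r : ℕ)) ω else 0)| ≤ 1
      by_cases hqN : q * K + r < N
      · rw [if_pos hqN]; exact hYbd _ ω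
      · rw [if_neg hqN, abs_zero]; norm_num
    · intro q
      show P[W (q * K + r)|ℱ (1 + (r : ℤ) + ((q : ℕ) : ℤ) * (K : ℤ))] ≤ᵐ[P] (fun _ => (0:ℝ))
      by_cases hqN : q * K + r < N
      · have heq : W (q * K + r) = Y (1 + (q * K + r : ℕ)) := by
          funext ω
          show (if q * K + r < N then Y (1 + (q * K + r : ℕ)) ω else 0) = _
          rw [if_pos hqN]
        have hidx : (1 + (r : ℤ) + ((q : ℕ) : ℤ) * (K : ℤ)) = (1 + ((q * K + r : ℕ) : ℤ)) := by
          push_cast; ring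
        rw [heq, hidx]
        exact hYcond _
      · have heq : W (q * K + r) = (0 : Ω → ℝ) := by
          funext ω
          show (if q * K + r < N then Y (1 + (q * K + r : ℕ)) ω else 0) = _
          rw [if_neg hqN]; rfl
        rw [heq, condExp_zero]
        exact Filter.Eventually.of_forall fun ω => le_rfl
  -- measurability and integrability of class sums
  have hWmeas : ∀ i, Measurable[m0] (W i) := by
    intro i
    by_cases hiN : i < N
    · have : W i = Y (1 + i) := by
        funext ω
        show (if i < N then Y (1 + i) ω else 0) = _
        rw [if_pos hiN]
      rw [this]; exact hYmeas0 _
    · have : W i = fun _ => (0:ℝ) := by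
        funext ω
        show (if i < N then Y (1 + i) ω else 0) = _
        rw [if_neg hiN]
      rw [this]; exact measurable_const
  have hTmeas : ∀ r, Measurable[m0] (T r) := fun r =>
    Finset.measurable_sum _ fun q _ => hWmeas _
  have hWbd : ∀ i ω, |W i ω| ≤ 1 := by
    intro i ω
    show |(if i < N then Y (1 + i) ω else 0)| ≤ 1
    by_cases hiN : i < N
    · rw [if_pos hiN]; exact hYbd _ ω
    · rw [if_neg hiN, abs_zero]; norm_num
  have hTbd : ∀ r ω, |T r ω| ≤ Mq := by
    intro r ω
    rw [hTdef]
    calc |∑ q ∈ Finset.range Mq, W (q * K + r) ω|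
        ≤ ∑ q ∈ Finset.range Mq, |W (q * K + r) ω| := Finset.abs_sum_le_sum_abs _ _
      _ ≤ ∑ q ∈ Finset.range Mq, 1 := Finset.sum_le_sum fun q _ => hWbd _ ω
      _ = Mq := by simp
  have hexpTint : ∀ r, Integrable (fun ω => Real.exp (c * T r ω)) P := by
    intro r
    refine bdd_integrable ((((hTmeas r).const_mul c).exp).aestronglyMeasurable (μ := P))
      (C := Real.exp (c * Mq)) fun ω => ?_
    rw [abs_of_pos (Real.exp_pos _)]
    apply Real.exp_le_exp.mpr
    exact mul_le_mul_of_nonneg_left ((abs_le.mp (hTbd r ω)).2) hcpos.le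
  have hSmeas : Measurable[m0] S := Finset.measurable_sum _ fun n _ => hYmeas0 n
  have hexpSint : Integrable (fun ω => Real.exp (lam2 * S ω)) P := by
    refine bdd_integrable (((hSmeas.const_mul lam2).exp).aestronglyMeasurable (μ := P))
      (C := Real.exp (lam2 * (K * Mq))) fun ω => ?_
    rw [abs_of_pos (Real.exp_pos _)]
    apply Real.exp_le_exp.mpr
    apply mul_le_mul_of_nonneg_left ?_ hlam2pos.le
    rw [hST ω]
    calc ∑ r ∈ Finset.range K, T r ω ≤ ∑ r ∈ Finset.range K, (Mq : ℝ) :=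
          Finset.sum_le_sum fun r _ => (abs_le.mp (hTbd r ω)).2
      _ = K * Mq := by simp [mul_comm]
  -- AM-GM
  have hAMGM : ∀ ω, Real.exp (lam2 * S ω)
      ≤ ∑ r ∈ Finset.range K, (1 / (K:ℝ)) * Real.exp (c * T r ω) := by
    intro ω
    have hgm := Real.geom_mean_le_arith_mean_weighted (Finset.range K)
      (fun _ => 1 / (K:ℝ)) (fun r => Real.exp (c * T r ω))
      (fun i _ => by positivity)
      (by rw [Finset.sum_const, Finset.card_range, nsmul_eq_mul]; field_simp)
      (fun i _ => (Real.exp_pos _).le)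
    calc Real.exp (lam2 * S ω)
        = ∏ r ∈ Finset.range K, (Real.exp (c * T r ω)) ^ (1 / (K:ℝ)) := by
          rw [hST ω, Finset.mul_sum, Real.exp_sum]
          refine Finset.prod_congr rfl fun r _ => ?_
          rw [Real.rpow_def_of_pos (Real.exp_pos _), Real.log_exp]
          congr 1
          rw [hcdef]
          field_simp
      _ ≤ ∑ r ∈ Finset.range K, (1 / (K:ℝ)) * Real.exp (c * T r ω) := hgm
  -- integral bound
  have hintS : ∫ ω, Real.exp (lam2 * S ω) ∂P ≤ Real.exp ((Mq : ℝ) * c^2/2) := by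
    have hsumint : Integrable
        (fun ω => ∑ r ∈ Finset.range K, (1 / (K:ℝ)) * Real.exp (c * T r ω)) P :=
      integrable_finset_sum _ fun r _ => (hexpTint r).const_mul _
    calc ∫ ω, Real.exp (lam2 * S ω) ∂P
        ≤ ∫ ω, ∑ r ∈ Finset.range K, (1 / (K:ℝ)) * Real.exp (c * T r ω) ∂P :=
          integral_mono_ae hexpSint hsumint (ae_of_all _ hAMGM)
      _ = ∑ r ∈ Finset.range K, ∫ ω, (1 / (K:ℝ)) * Real.exp (c * T r ω) ∂P :=
          integral_finset_sum _ fun r _ => (hexpTint r).const_mul _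
      _ = ∑ r ∈ Finset.range K, (1 / (K:ℝ)) * ∫ ω, Real.exp (c * T r ω) ∂P := by
          refine Finset.sum_congr rfl fun r _ => ?_
          exact integral_const_mul _ _
      _ ≤ ∑ r ∈ Finset.range K, (1 / (K:ℝ)) * Real.exp ((Mq : ℝ) * c^2/2) :=
          Finset.sum_le_sum fun r _ =>
            mul_le_mul_of_nonneg_left (hT r) (by positivity)
      _ = Real.exp ((Mq : ℝ) * c^2/2) := by
          rw [Finset.sum_const, Finset.card_range, nsmul_eq_mul]
          field_simp
  -- Markov
  have hmarkov := mul_meas_ge_le_integral_of_nonneg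
    (f := fun ω => Real.exp (lam2 * S ω))
    (ae_of_all _ fun ω => (Real.exp_pos _).le) hexpSint (Real.exp (lam2 * t))
  have hsubset : {ω | t ≤ S ω} ⊆ {ω | Real.exp (lam2 * t) ≤ Real.exp (lam2 * S ω)} := by
    intro ω hω
    exact Real.exp_le_exp.mpr (mul_le_mul_of_nonneg_left hω hlam2pos.le)
  have hPle : (P {ω | t ≤ S ω}).toReal ≤ Real.exp ((Mq : ℝ) * c^2/2 - lam2 * t) := by
    have h1 : (P {ω | t ≤ S ω}).toReal
        ≤ (P {ω | Real.exp (lam2 * t) ≤ Real.exp (lam2 * S ω)}).toReal :=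
      ENNReal.toReal_mono (measure_ne_top P _) (measure_mono hsubset)
    have h2 : (P {ω | Real.exp (lam2 * t) ≤ Real.exp (lam2 * S ω)}).toReal
        ≤ Real.exp ((Mq : ℝ) * c^2/2) / Real.exp (lam2 * t) := by
      rw [le_div_iff₀ (Real.exp_pos _)]
      calc (P {ω | Real.exp (lam2 * t) ≤ Real.exp (lam2 * S ω)}).toReal
            * Real.exp (lam2 * t)
          = Real.exp (lam2 * t)
            * (P {ω | Real.exp (lam2 * t) ≤ Real.exp (lam2 * S ω)}).toReal := by ring
        _ ≤ ∫ ω, Real.exp (lam2 * S ω) ∂P := hmarkov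
        _ ≤ Real.exp ((Mq : ℝ) * c^2/2) := hintS
    rw [Real.exp_sub]
    exact le_trans h1 h2
  -- numerics
  have hKne : (K:ℝ) ≠ 0 := ne_of_gt hKR
  have ht2 : t^2 = 16 * ((K:ℝ) * (N + K) * L) := by
    rw [htdef, mul_pow, Real.sq_sqrt (by positivity)]
    norm_num
  have hKNlam : (K:ℝ) * (N + K) * lam2 = t := by
    rw [hlam2def]
    field_simp
  have hlam2t : lam2 * t = 16 * L := by
    have h1 : lam2 * t = t^2 / ((K:ℝ) * (N + K)) := by
      rw [hlam2def]
      field_simp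
    rw [h1, ht2]
    field_simp
  have hMqK2R : (Mq : ℝ) * K ≤ (N : ℝ) + K := by
    have := hMqK.2
    push_cast
    exact_mod_cast this
  have hMqc : (Mq : ℝ) * c^2 ≤ 16 * L := by
    calc (Mq : ℝ) * c^2 = ((Mq : ℝ) * K) * ((K:ℝ) * lam2^2) := by
          rw [hcdef]; ring
      _ ≤ ((N : ℝ) + K) * ((K:ℝ) * lam2^2) :=
          mul_le_mul_of_nonneg_right hMqK2R (by positivity)
      _ = ((K:ℝ) * (N + K) * lam2) * lam2 := by ring
      _ = t * lam2 := by rw [hKNlam]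
      _ = 16 * L := by rw [mul_comm]; exact hlam2t
  have hexpbound : Real.exp ((Mq : ℝ) * c^2/2 - lam2 * t) ≤ ε ^ 8 := by
    have h1 : (Mq : ℝ) * c^2/2 - lam2 * t ≤ -(8 * L) := by
      rw [hlam2t]; linarith
    calc Real.exp ((Mq : ℝ) * c^2/2 - lam2 * t) ≤ Real.exp (-(8 * L)) :=
          Real.exp_le_exp.mpr h1
      _ = ε ^ 8 := by
          rw [hLdef, one_div, Real.log_inv]
          rw [show -(8 * -Real.log ε) = (8:ℕ) * Real.log ε by push_cast; ring]
          rw [Real.exp_nat_mul, Real.exp_log hε0]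
  have hpow : ε ^ 8 < ε := pow_lt_self_of_lt_one₀ hε0 hε1 (by norm_num)
  have hfinal : (P {ω | t ≤ S ω}).toReal < ε := lt_of_le_of_lt hPle
    (lt_of_le_of_lt hexpbound hpow)
  exact (ENNReal.lt_ofReal_iff_toReal_lt (measure_ne_top P _)).mpr hfinal
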